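/- For all p, q ∈ ℂ with p ≠ 0, q ≠ 0 and p ≠ q: if L is a complex Lie algebra admitting a basis realizing the bracket pattern d₅(p,q,q) and L′ is a complex Lie algebra admitting a basis realizing the bracket pattern d₅(2,1,1), then L and L′ are isomorphic as Lie algebras over ℂ. -/

import Mathlib

/-- `Realizes L c` means that the complex Lie algebra `L` admits a basis `e₁, …, e₅`
(indexed by `Fin 5`) in which the brackets of basis vectors are given by the
structure constants `c`, i.e. `⁅eᵢ, eⱼ⁆ = ∑ₖ c i j k • eₖ` for all `i < j`,
all brackets of basis vectors being determined by these via antisymmetry. -/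
def Realizes (L : Type) [LieRing L] [LieAlgebra ℂ L]
    (c : Fin 5 → Fin 5 → Fin 5 → ℂ) : Prop :=
  ∃ e : Module.Basis (Fin 5) ℂ L, ∀ i j : Fin 5, i < j →
    ⁅e i, e j⁆ = ∑ k, c i j k • e k

/-- The bracket pattern `d₅(p,q,r)` (indices shifted down by one so the basis is indexed by `Fin 5`): `[e₂,e₄]=e₁+p·e₂`, `[e₃,e₄]=e₂+q·e₃`, `[e₁,e₅]=p(q−r)·e₁`, `[e₂,e₅]=(r−q)·e₁`, `[e₃,e₅]=e₁+r·e₂−r(p−q)·e₃`, all other brackets zero. -/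
def d5 (p q r : ℂ) : Fin 5 → Fin 5 → Fin 5 → ℂ := fun i j =>
  if i = 1 ∧ j = 3 then ![1, p, 0, 0, 0]
  else if i = 2 ∧ j = 3 then ![0, 1, q, 0, 0]
  else if i = 0 ∧ j = 4 then ![p * (q - r), 0, 0, 0, 0]
  else if i = 1 ∧ j = 4 then ![r - q, 0, 0, 0, 0]
  else if i = 2 ∧ j = 4 then ![1, r, -(r * (p - q)), 0, 0]
  else 0

set_option maxHeartbeats 4000000 in
/-- For `p ≠ 0`, `q ≠ 0`, `p ≠ q`, a Lie algebra realizing `d₅(p,q,q)` is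
isomorphic to one realizing `d₅(2,1,1)`. -/
theorem d5_pqq_iso_d5_211 (p q : ℂ) (hp : p ≠ 0) (hq : q ≠ 0) (hpq : p ≠ q)
    (L L' : Type) [LieRing L] [LieAlgebra ℂ L] [LieRing L'] [LieAlgebra ℂ L']
    (hL : Realizes L (d5 p q q)) (hL' : Realizes L' (d5 2 1 1)) :
    Nonempty (L ≃ₗ⁅ℂ⁆ L') := by
  obtain ⟨e, he⟩ := hL
  obtain ⟨f, hf⟩ := hL'
  have hpq' : p - q ≠ 0 := sub_ne_zero.mpr hpq
  have hqp' : q - p ≠ 0 := sub_ne_zero.mpr (Ne.symm hpq)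
  have he01 : ⁅e 0, e 1⁆ = 0 := by simpa [d5, Fin.sum_univ_five] using he 0 1 (by decide)
  have he02 : ⁅e 0, e 2⁆ = 0 := by simpa [d5, Fin.sum_univ_five] using he 0 2 (by decide)
  have he03 : ⁅e 0, e 3⁆ = 0 := by simpa [d5, Fin.sum_univ_five] using he 0 3 (by decide)
  have he04 : ⁅e 0, e 4⁆ = 0 := by simpa [d5, Fin.sum_univ_five] using he 0 4 (by decide)
  have he12 : ⁅e 1, e 2⁆ = 0 := by simpa [d5, Fin.sum_univ_five] using he 1 2 (by decide)
  have he13 : ⁅e 1, e 3⁆ = e 0 + p • e 1 := by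
    simpa [d5, Fin.sum_univ_five] using he 1 3 (by decide)
  have he14 : ⁅e 1, e 4⁆ = 0 := by simpa [d5, Fin.sum_univ_five] using he 1 4 (by decide)
  have he23 : ⁅e 2, e 3⁆ = e 1 + q • e 2 := by
    simpa [d5, Fin.sum_univ_five] using he 2 3 (by decide)
  have he24 : ⁅e 2, e 4⁆ = e 0 + q • e 1 + (-(q * (p - q))) • e 2 := by
    simpa [d5, Fin.sum_univ_five, add_assoc] using he 2 4 (by decide)
  have he34 : ⁅e 3, e 4⁆ = 0 := by simpa [d5, Fin.sum_univ_five] using he 3 4 (by decide)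
  have hf01 : ⁅f 0, f 1⁆ = 0 := by simpa [d5, Fin.sum_univ_five] using hf 0 1 (by decide)
  have hf02 : ⁅f 0, f 2⁆ = 0 := by simpa [d5, Fin.sum_univ_five] using hf 0 2 (by decide)
  have hf03 : ⁅f 0, f 3⁆ = 0 := by simpa [d5, Fin.sum_univ_five] using hf 0 3 (by decide)
  have hf04 : ⁅f 0, f 4⁆ = 0 := by simpa [d5, Fin.sum_univ_five] using hf 0 4 (by decide)
  have hf12 : ⁅f 1, f 2⁆ = 0 := by simpa [d5, Fin.sum_univ_five] using hf 1 2 (by decide)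
  have hf13 : ⁅f 1, f 3⁆ = f 0 + (2:ℂ) • f 1 := by
    simpa [d5, Fin.sum_univ_five] using hf 1 3 (by decide)
  have hf14 : ⁅f 1, f 4⁆ = 0 := by simpa [d5, Fin.sum_univ_five] using hf 1 4 (by decide)
  have hf23 : ⁅f 2, f 3⁆ = f 1 + f 2 := by
    simpa [d5, Fin.sum_univ_five] using hf 2 3 (by decide)
  have hf24 : ⁅f 2, f 4⁆ = f 0 + f 1 + (-1 : ℂ) • f 2 := by
    have h := hf 2 4 (by decide)
    rw [h]
    simp [d5, Fin.sum_univ_five, add_assoc]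
    norm_num
  have hf34 : ⁅f 3, f 4⁆ = 0 := by simpa [d5, Fin.sum_univ_five] using hf 3 4 (by decide)
  have hf10 : ⁅f 1, f 0⁆ = 0 := by rw [← lie_skew, hf01, neg_zero]
  set V : Fin 5 → L' := ![(p*q*(q-p)) • f 0, (2*q*(q-p)) • f 1,
    (-(p*q*(q-p)) - p) • f 0 + (-(p*q*(q-p)) - 2*q) • f 1 + (p*q*(q-p)) • f 2,
    (p/2) • f 3 + (p/2 - q) • f 4, (q*(p-q)) • f 4] with hV
  set g : L →ₗ[ℂ] L' := e.constr ℂ V with hg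
  have hgv0 : g (e 0) = (p*q*(q-p)) • f 0 := e.constr_basis ℂ V 0
  have hgv1 : g (e 1) = (2*q*(q-p)) • f 1 := e.constr_basis ℂ V 1
  have hgv2 : g (e 2) = (-(p*q*(q-p)) - p) • f 0 + (-(p*q*(q-p)) - 2*q) • f 1
      + (p*q*(q-p)) • f 2 := e.constr_basis ℂ V 2
  have hgv3 : g (e 3) = (p/2) • f 3 + (p/2 - q) • f 4 := e.constr_basis ℂ V 3
  have hgv4 : g (e 4) = (q*(p-q)) • f 4 := e.constr_basis ℂ V 4
  have k01 : g ⁅e 0, e 1⁆ = ⁅g (e 0), g (e 1)⁆ := by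
    rw [he01]
    simp only [map_zero, map_add, map_smul, hgv0, hgv1, hgv2, hgv3, hgv4, lie_add, add_lie, lie_smul, smul_lie, lie_self, hf01, hf02, hf03, hf04, hf10, hf12, hf13, hf14, hf23, hf24, hf34, smul_zero, zero_smul, add_zero, zero_add, smul_add, smul_neg, neg_zero]
    try (match_scalars <;> ring)
  have k02 : g ⁅e 0, e 2⁆ = ⁅g (e 0), g (e 2)⁆ := by
    rw [he02]
    simp only [map_zero, map_add, map_smul, hgv0, hgv1, hgv2, hgv3, hgv4, lie_add, add_lie, lie_smul, smul_lie, lie_self, hf01, hf02, hf03, hf04, hf10, hf12, hf13, hf14, hf23, hf24, hf34, smul_zero, zero_smul, add_zero, zero_add, smul_add, smul_neg, neg_zero]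
    try (match_scalars <;> ring)
  have k03 : g ⁅e 0, e 3⁆ = ⁅g (e 0), g (e 3)⁆ := by
    rw [he03]
    simp only [map_zero, map_add, map_smul, hgv0, hgv1, hgv2, hgv3, hgv4, lie_add, add_lie, lie_smul, smul_lie, lie_self, hf01, hf02, hf03, hf04, hf10, hf12, hf13, hf14, hf23, hf24, hf34, smul_zero, zero_smul, add_zero, zero_add, smul_add, smul_neg, neg_zero]
    try (match_scalars <;> ring)
  have k04 : g ⁅e 0, e 4⁆ = ⁅g (e 0), g (e 4)⁆ := by
    rw [he04]
    simp only [map_zero, map_add, map_smul, hgv0, hgv1, hgv2, hgv3, hgv4, lie_add, add_lie, lie_smul, smul_lie, lie_self, hf01, hf02, hf03, hf04, hf10, hf12, hf13, hf14, hf23, hf24, hf34, smul_zero, zero_smul, add_zero, zero_add, smul_add, smul_neg, neg_zero]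
    try (match_scalars <;> ring)
  have k12 : g ⁅e 1, e 2⁆ = ⁅g (e 1), g (e 2)⁆ := by
    rw [he12]
    simp only [map_zero, map_add, map_smul, hgv0, hgv1, hgv2, hgv3, hgv4, lie_add, add_lie, lie_smul, smul_lie, lie_self, hf01, hf02, hf03, hf04, hf10, hf12, hf13, hf14, hf23, hf24, hf34, smul_zero, zero_smul, add_zero, zero_add, smul_add, smul_neg, neg_zero]
    try (match_scalars <;> ring)
  have k13 : g ⁅e 1, e 3⁆ = ⁅g (e 1), g (e 3)⁆ := by
    rw [he13]
    simp only [map_zero, map_add, map_smul, hgv0, hgv1, hgv2, hgv3, hgv4, lie_add, add_lie, lie_smul, smul_lie, lie_self, hf01, hf02, hf03, hf04, hf10, hf12, hf13, hf14, hf23, hf24, hf34, smul_zero, zero_smul, add_zero, zero_add, smul_add, smul_neg, neg_zero]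
    try (match_scalars <;> ring)
  have k14 : g ⁅e 1, e 4⁆ = ⁅g (e 1), g (e 4)⁆ := by
    rw [he14]
    simp only [map_zero, map_add, map_smul, hgv0, hgv1, hgv2, hgv3, hgv4, lie_add, add_lie, lie_smul, smul_lie, lie_self, hf01, hf02, hf03, hf04, hf10, hf12, hf13, hf14, hf23, hf24, hf34, smul_zero, zero_smul, add_zero, zero_add, smul_add, smul_neg, neg_zero]
    try (match_scalars <;> ring)
  have k23 : g ⁅e 2, e 3⁆ = ⁅g (e 2), g (e 3)⁆ := by
    rw [he23]
    simp only [map_zero, map_add, map_smul, hgv0, hgv1, hgv2, hgv3, hgv4, lie_add, add_lie, lie_smul, smul_lie, lie_self, hf01, hf02, hf03, hf04, hf10, hf12, hf13, hf14, hf23, hf24, hf34, smul_zero, zero_smul, add_zero, zero_add, smul_add, smul_neg, neg_zero]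
    try (match_scalars <;> ring)
  have k24 : g ⁅e 2, e 4⁆ = ⁅g (e 2), g (e 4)⁆ := by
    rw [he24]
    simp only [map_zero, map_add, map_smul, hgv0, hgv1, hgv2, hgv3, hgv4, lie_add, add_lie, lie_smul, smul_lie, lie_self, hf01, hf02, hf03, hf04, hf10, hf12, hf13, hf14, hf23, hf24, hf34, smul_zero, zero_smul, add_zero, zero_add, smul_add, smul_neg, neg_zero]
    try (match_scalars <;> ring)
  have k34 : g ⁅e 3, e 4⁆ = ⁅g (e 3), g (e 4)⁆ := by
    rw [he34]
    simp only [map_zero, map_add, map_smul, hgv0, hgv1, hgv2, hgv3, hgv4, lie_add, add_lie, lie_smul, smul_lie, lie_self, hf01, hf02, hf03, hf04, hf10, hf12, hf13, hf14, hf23, hf24, hf34, smul_zero, zero_smul, add_zero, zero_add, smul_add, smul_neg, neg_zero]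
    try (match_scalars <;> ring)
  set W : Fin 5 → L := ![(1/(p*q*(q-p))) • e 0, (1/(2*q*(q-p))) • e 1,
    ((p*q*(q-p) + p)/(p*q*(q-p))^2) • e 0
      + ((p*q*(q-p) + 2*q)/(p*q*(q-p)*(2*q*(q-p)))) • e 1 + (1/(p*q*(q-p))) • e 2,
    (2/p) • e 3 + ((2*q-p)/(p*q*(p-q))) • e 4, (1/(q*(p-q))) • e 4] with hW
  set g' : L' →ₗ[ℂ] L := f.constr ℂ W with hg'
  have hgw0 : g' (f 0) = (1/(p*q*(q-p))) • e 0 := f.constr_basis ℂ W 0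
  have hgw1 : g' (f 1) = (1/(2*q*(q-p))) • e 1 := f.constr_basis ℂ W 1
  have hgw2 : g' (f 2) = ((p*q*(q-p) + p)/(p*q*(q-p))^2) • e 0
      + ((p*q*(q-p) + 2*q)/(p*q*(q-p)*(2*q*(q-p)))) • e 1 + (1/(p*q*(q-p))) • e 2 :=
    f.constr_basis ℂ W 2
  have hgw3 : g' (f 3) = (2/p) • e 3 + ((2*q-p)/(p*q*(p-q))) • e 4 := f.constr_basis ℂ W 3
  have hgw4 : g' (f 4) = (1/(q*(p-q))) • e 4 := f.constr_basis ℂ W 4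
  have hnz1 : p * q * (q - p) ≠ 0 := mul_ne_zero (mul_ne_zero hp hq) hqp'
  have hnz2 : q * (q - p) ≠ 0 := mul_ne_zero hq hqp'
  have hnz3 : q * (p - q) ≠ 0 := mul_ne_zero hq hpq'
  have hnz4 : p * q * (p - q) ≠ 0 := mul_ne_zero (mul_ne_zero hp hq) hpq'
  have hc0 : g' (g (e 0)) = e 0 := by
    simp only [hgv0, hgv1, hgv2, hgv3, hgv4, map_add, map_smul, hgw0, hgw1, hgw2, hgw3, hgw4]
    match_scalars <;> field_simp <;> ring
  have hc1 : g' (g (e 1)) = e 1 := by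
    simp only [hgv0, hgv1, hgv2, hgv3, hgv4, map_add, map_smul, hgw0, hgw1, hgw2, hgw3, hgw4]
    match_scalars <;> field_simp <;> ring
  have hc2 : g' (g (e 2)) = e 2 := by
    simp only [hgv0, hgv1, hgv2, hgv3, hgv4, map_add, map_smul, hgw0, hgw1, hgw2, hgw3, hgw4]
    match_scalars <;> field_simp <;> ring
  have hc3 : g' (g (e 3)) = e 3 := by
    simp only [hgv0, hgv1, hgv2, hgv3, hgv4, map_add, map_smul, hgw0, hgw1, hgw2, hgw3, hgw4]
    match_scalars <;> field_simp <;> ring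
  have hc4 : g' (g (e 4)) = e 4 := by
    simp only [hgv0, hgv1, hgv2, hgv3, hgv4, map_add, map_smul, hgw0, hgw1, hgw2, hgw3, hgw4]
    match_scalars <;> field_simp <;> ring
  have hd0 : g (g' (f 0)) = f 0 := by
    simp only [hgw0, hgw1, hgw2, hgw3, hgw4, map_add, map_smul, hgv0, hgv1, hgv2, hgv3, hgv4]
    match_scalars <;> field_simp <;> ring
  have hd1 : g (g' (f 1)) = f 1 := by
    simp only [hgw0, hgw1, hgw2, hgw3, hgw4, map_add, map_smul, hgv0, hgv1, hgv2, hgv3, hgv4]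
    match_scalars <;> field_simp <;> ring
  have hd2 : g (g' (f 2)) = f 2 := by
    simp only [hgw0, hgw1, hgw2, hgw3, hgw4, map_add, map_smul, hgv0, hgv1, hgv2, hgv3, hgv4]
    match_scalars <;> field_simp <;> ring
  have hd3 : g (g' (f 3)) = f 3 := by
    simp only [hgw0, hgw1, hgw2, hgw3, hgw4, map_add, map_smul, hgv0, hgv1, hgv2, hgv3, hgv4]
    match_scalars <;> field_simp <;> ring
  have hd4 : g (g' (f 4)) = f 4 := by
    simp only [hgw0, hgw1, hgw2, hgw3, hgw4, map_add, map_smul, hgv0, hgv1, hgv2, hgv3, hgv4]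
    match_scalars <;> field_simp <;> ring
  have hcomp1 : g'.comp g = LinearMap.id := by
    refine e.ext fun i => ?_
    rw [LinearMap.comp_apply, LinearMap.id_apply]
    have hi : i = 0 ∨ i = 1 ∨ i = 2 ∨ i = 3 ∨ i = 4 := by omega
    rcases hi with rfl | rfl | rfl | rfl | rfl
    · exact hc0
    · exact hc1
    · exact hc2
    · exact hc3
    · exact hc4
  have hcomp2 : g.comp g' = LinearMap.id := by
    refine f.ext fun i => ?_
    rw [LinearMap.comp_apply, LinearMap.id_apply]
    have hi : i = 0 ∨ i = 1 ∨ i = 2 ∨ i = 3 ∨ i = 4 := by omega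
    rcases hi with rfl | rfl | rfl | rfl | rfl
    · exact hd0
    · exact hd1
    · exact hd2
    · exact hd3
    · exact hd4
  have rev : ∀ i j : Fin 5, g ⁅e i, e j⁆ = ⁅g (e i), g (e j)⁆ →
      g ⁅e j, e i⁆ = ⁅g (e j), g (e i)⁆ := by
    intro i j h
    calc g ⁅e j, e i⁆ = g (-⁅e i, e j⁆) := by rw [← lie_skew]
      _ = -g ⁅e i, e j⁆ := map_neg g _
      _ = -⁅g (e i), g (e j)⁆ := by rw [h]
      _ = ⁅g (e j), g (e i)⁆ := lie_skew _ _
  have keyall : ∀ i j : Fin 5, g ⁅e i, e j⁆ = ⁅g (e i), g (e j)⁆ := by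
    intro i j
    have hi : i = 0 ∨ i = 1 ∨ i = 2 ∨ i = 3 ∨ i = 4 := by omega
    have hj : j = 0 ∨ j = 1 ∨ j = 2 ∨ j = 3 ∨ j = 4 := by omega
    rcases hi with rfl | rfl | rfl | rfl | rfl <;>
      rcases hj with rfl | rfl | rfl | rfl | rfl <;>
      first
        | simp only [lie_self, map_zero]
        | exact k01 | exact k02 | exact k03 | exact k04 | exact k12
        | exact k13 | exact k14 | exact k23 | exact k24 | exact k34
        | exact rev _ _ k01 | exact rev _ _ k02 | exact rev _ _ k03 | exact rev _ _ k04
        | exact rev _ _ k12 | exact rev _ _ k13 | exact rev _ _ k14 | exact rev _ _ k23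
        | exact rev _ _ k24 | exact rev _ _ k34
  have main : ∀ x y : L, g ⁅x, y⁆ = ⁅g x, g y⁆ := by
    let B1 : L →ₗ[ℂ] L →ₗ[ℂ] L' := LinearMap.mk₂ ℂ (fun x y => g ⁅x, y⁆)
      (fun x x' y => by simp only [add_lie, map_add])
      (fun c x y => by simp only [smul_lie, map_smul])
      (fun x y y' => by simp only [lie_add, map_add])
      (fun c x y => by simp only [lie_smul, map_smul])
    let B2 : L →ₗ[ℂ] L →ₗ[ℂ] L' := LinearMap.mk₂ ℂ (fun x y => ⁅g x, g y⁆)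
      (fun x x' y => by simp only [map_add, add_lie])
      (fun c x y => by simp only [map_smul, smul_lie])
      (fun x y y' => by simp only [map_add, lie_add])
      (fun c x y => by simp only [map_smul, lie_smul])
    have hB : B1 = B2 := e.ext fun i => e.ext fun j => keyall i j
    intro x y
    exact LinearMap.congr_fun (LinearMap.congr_fun hB x) y
  have li : Function.LeftInverse g' g := fun x => by
    have h := LinearMap.congr_fun hcomp1 x
    simpa using h
  have ri : Function.RightInverse g' g := fun x => by
    have h := LinearMap.congr_fun hcomp2 x
    simpa using h
  exact ⟨⟨⟨g, fun {x y} => main x y⟩, g', li, ri⟩⟩
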